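/- arXiv:2504.03309 — 2 statements merged into one kernel-verified Lean document; each statement's English description precedes it below -/
import Mathlib

section
/- Suppose w₁, w₂, w₃ > 0 and w₂w₃ > w₄² + w₅². Then for any unit vector n ∈ ℝ³ and any (ẋ,ṅ) ∈ ℝ³×ℝ³ with ṅ·n = 0, the quantity Q = w₁|ẋ·n|² + w₂‖ẋ×n‖² + w₃‖ṅ‖² + 2w₄(ẋ·ṅ) + 2w₅ ẋ·(ṅ×n) is nonnegative, and Q = 0 implies ẋ = 0 and ṅ = 0. -/
open Matrix

set_option maxHeartbeats 1000000

/-- Under the positivity constraints `w₁, w₂, w₃ > 0` and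
`w₂w₃ > w₄² + w₅²`, the quadratic form
`Q = w₁|ẋ·n|² + w₂‖ẋ×n‖² + w₃‖ṅ‖² + 2w₄(ẋ·ṅ) + 2w₅ ẋ·(ṅ×n)`
is nonnegative, and vanishes only when `ẋ = 0` and `ṅ = 0`. -/
theorem Qform_posdef
    (w₁ w₂ w₃ w₄ w₅ : ℝ)
    (hw₁ : 0 < w₁) (hw₂ : 0 < w₂) (hw₃ : 0 < w₃)
    (hw : w₄ ^ 2 + w₅ ^ 2 < w₂ * w₃)
    (n xdot ndot : Fin 3 → ℝ)
    (hn : n ⬝ᵥ n = 1) (htan : ndot ⬝ᵥ n = 0) :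
    0 ≤ w₁ * (xdot ⬝ᵥ n) ^ 2
        + w₂ * ((xdot ⨯₃ n) ⬝ᵥ (xdot ⨯₃ n))
        + w₃ * (ndot ⬝ᵥ ndot)
        + 2 * w₄ * (xdot ⬝ᵥ ndot)
        + 2 * w₅ * (xdot ⬝ᵥ (ndot ⨯₃ n)) ∧
    (w₁ * (xdot ⬝ᵥ n) ^ 2
        + w₂ * ((xdot ⨯₃ n) ⬝ᵥ (xdot ⨯₃ n))
        + w₃ * (ndot ⬝ᵥ ndot)
        + 2 * w₄ * (xdot ⬝ᵥ ndot)
        + 2 * w₅ * (xdot ⬝ᵥ (ndot ⨯₃ n)) = 0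
      → xdot = 0 ∧ ndot = 0) := by
  have hn' : n 0 * n 0 + n 1 * n 1 + n 2 * n 2 = 1 := by
    simpa [dotProduct, Fin.sum_univ_three] using hn
  have htan' : ndot 0 * n 0 + ndot 1 * n 1 + ndot 2 * n 2 = 0 := by
    simpa [dotProduct, Fin.sum_univ_three] using htan
  set Q : ℝ := w₁ * (xdot ⬝ᵥ n) ^ 2
      + w₂ * ((xdot ⨯₃ n) ⬝ᵥ (xdot ⨯₃ n))
      + w₃ * (ndot ⬝ᵥ ndot)
      + 2 * w₄ * (xdot ⬝ᵥ ndot)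
      + 2 * w₅ * (xdot ⬝ᵥ (ndot ⨯₃ n)) with hQ
  have hDpos : 0 < w₂ * w₃ - w₄ ^ 2 - w₅ ^ 2 := by nlinarith
  have key : w₂ * Q =
      w₁ * w₂ * (xdot 0 * n 0 + xdot 1 * n 1 + xdot 2 * n 2) ^ 2
      + ((w₂ * (xdot 0 - (xdot 0 * n 0 + xdot 1 * n 1 + xdot 2 * n 2) * n 0)
            + w₄ * ndot 0 + w₅ * (ndot 1 * n 2 - ndot 2 * n 1)) ^ 2
        + (w₂ * (xdot 1 - (xdot 0 * n 0 + xdot 1 * n 1 + xdot 2 * n 2) * n 1)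
            + w₄ * ndot 1 + w₅ * (ndot 2 * n 0 - ndot 0 * n 2)) ^ 2
        + (w₂ * (xdot 2 - (xdot 0 * n 0 + xdot 1 * n 1 + xdot 2 * n 2) * n 2)
            + w₄ * ndot 2 + w₅ * (ndot 0 * n 1 - ndot 1 * n 0)) ^ 2)
      + (w₂ * w₃ - w₄ ^ 2 - w₅ ^ 2) * (ndot 0 ^ 2 + ndot 1 ^ 2 + ndot 2 ^ 2) := by
    simp only [hQ, cross_apply, dotProduct, Fin.sum_univ_three, Matrix.cons_val_zero,
      Matrix.cons_val_one, Matrix.head_cons, Matrix.cons_val_two, Matrix.tail_cons]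
    linear_combination
      (w₂ ^ 2 * ((xdot 0 ^ 2 + xdot 1 ^ 2 + xdot 2 ^ 2)
          - (xdot 0 * n 0 + xdot 1 * n 1 + xdot 2 * n 2) ^ 2)
        - w₅ ^ 2 * (ndot 0 ^ 2 + ndot 1 ^ 2 + ndot 2 ^ 2)) * hn'
      + (w₅ ^ 2 * (ndot 0 * n 0 + ndot 1 * n 1 + ndot 2 * n 2)
        + 2 * w₂ * w₄ * (xdot 0 * n 0 + xdot 1 * n 1 + xdot 2 * n 2)) * htan'
  have hwQ : 0 ≤ w₂ * Q := by rw [key]; positivity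
  have hQnn : 0 ≤ Q := by
    have h := div_nonneg hwQ hw₂.le
    rwa [mul_div_cancel_left₀ _ (ne_of_gt hw₂)] at h
  refine ⟨hQnn, fun h0 => ?_⟩
  obtain ⟨a, ha⟩ : ∃ a : ℝ, a = xdot 0 * n 0 + xdot 1 * n 1 + xdot 2 * n 2 := ⟨_, rfl⟩
  obtain ⟨v0, hv0⟩ : ∃ v : ℝ, v = w₂ * (xdot 0 - a * n 0) + w₄ * ndot 0
      + w₅ * (ndot 1 * n 2 - ndot 2 * n 1) := ⟨_, rfl⟩
  obtain ⟨v1, hv1⟩ : ∃ v : ℝ, v = w₂ * (xdot 1 - a * n 1) + w₄ * ndot 1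
      + w₅ * (ndot 2 * n 0 - ndot 0 * n 2) := ⟨_, rfl⟩
  obtain ⟨v2, hv2⟩ : ∃ v : ℝ, v = w₂ * (xdot 2 - a * n 2) + w₄ * ndot 2
      + w₅ * (ndot 0 * n 1 - ndot 1 * n 0) := ⟨_, rfl⟩
  have hsum : w₁ * w₂ * a ^ 2 + (v0 ^ 2 + v1 ^ 2 + v2 ^ 2)
      + (w₂ * w₃ - w₄ ^ 2 - w₅ ^ 2) * (ndot 0 ^ 2 + ndot 1 ^ 2 + ndot 2 ^ 2) = 0 := by
    rw [hv0, hv1, hv2, ha, ← key, h0, mul_zero]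
  clear hwQ hQnn h0 key hQ Q hn htan hn' htan' ha
  have hww : 0 < w₁ * w₂ := mul_pos hw₁ hw₂
  have sqz : ∀ x : ℝ, x ^ 2 ≤ 0 → x = 0 := fun x hx =>
    (pow_eq_zero_iff two_ne_zero).mp (le_antisymm hx (sq_nonneg x))
  have hnds : ndot 0 ^ 2 + ndot 1 ^ 2 + ndot 2 ^ 2 ≤ 0 := by
    have h1 : (w₂ * w₃ - w₄ ^ 2 - w₅ ^ 2) * (ndot 0 ^ 2 + ndot 1 ^ 2 + ndot 2 ^ 2) ≤ 0 := by
      nlinarith [sq_nonneg v0, sq_nonneg v1, sq_nonneg v2, mul_nonneg hww.le (sq_nonneg a)]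
    nlinarith [h1, hDpos, sq_nonneg (ndot 0), sq_nonneg (ndot 1), sq_nonneg (ndot 2)]
  have hnd0 : ndot 0 = 0 := sqz _ (by nlinarith [sq_nonneg (ndot 1), sq_nonneg (ndot 2)])
  have hnd1 : ndot 1 = 0 := sqz _ (by nlinarith [sq_nonneg (ndot 0), sq_nonneg (ndot 2)])
  have hnd2 : ndot 2 = 0 := sqz _ (by nlinarith [sq_nonneg (ndot 0), sq_nonneg (ndot 1)])
  have haz : a = 0 := by
    have h1 : w₁ * w₂ * a ^ 2 ≤ 0 := by
      nlinarith [sq_nonneg v0, sq_nonneg v1, sq_nonneg v2, sq_nonneg (ndot 0),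
        sq_nonneg (ndot 1), sq_nonneg (ndot 2), hDpos.le,
        mul_nonneg hDpos.le (by positivity : (0:ℝ) ≤ ndot 0 ^ 2 + ndot 1 ^ 2 + ndot 2 ^ 2)]
    exact sqz _ (by nlinarith [h1, hww, sq_nonneg a])
  have hww' : 0 ≤ w₁ * w₂ * a ^ 2 := mul_nonneg hww.le (sq_nonneg a)
  have hDnn : 0 ≤ (w₂ * w₃ - w₄ ^ 2 - w₅ ^ 2) * (ndot 0 ^ 2 + ndot 1 ^ 2 + ndot 2 ^ 2) :=
    mul_nonneg hDpos.le (by positivity)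
  have hv0z : v0 = 0 := sqz _ (by linarith [sq_nonneg v1, sq_nonneg v2])
  have hv1z : v1 = 0 := sqz _ (by linarith [sq_nonneg v0, sq_nonneg v2])
  have hv2z : v2 = 0 := sqz _ (by linarith [sq_nonneg v0, sq_nonneg v1])
  have hx : ∀ i, w₂ * xdot i = 0 := by
    intro i
    fin_cases i
    · simpa [hv0, haz, hnd0, hnd1, hnd2] using hv0z
    · simpa [hv1, haz, hnd0, hnd1, hnd2] using hv1z
    · simpa [hv2, haz, hnd0, hnd1, hnd2] using hv2z
  constructor
  · funext i
    have h := hx i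
    have hxi : xdot i = 0 := by
      rcases mul_eq_zero.mp h with h' | h'
      · exact absurd h' (ne_of_gt hw₂)
      · exact h'
    simpa using hxi
  · funext i
    fin_cases i <;> simp [hnd0, hnd1, hnd2]
end

section
/- Let p₁ = (x₁,n₁), p₂ = (x₂,n₂) ∈ M3 with n₁ ≠ ±n₂. Define θ = arccos(n₁·n₂), L = (n₂n₁ᵀ - n₁n₂ᵀ)/sin θ, x⃗ = x₂ - x₁, x_m = (x₁+x₂)/2, and decompose x⃗ = x⃗_∥ + x⃗_⊥ with x⃗_∥ the orthogonal projection onto N = span{n₁,n₂}. Let R = I + sin(θ)L + (1-cos θ)L² and c = x_m + (1/2)cot(θ/2) L x⃗_∥. Then the map S(x) = c + R(x - c) + x⃗_⊥ satisfies S(x₁) = x₂ (and R n₁ = n₂), i.e., the planar screw displacement maps p₁ to p₂. -/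
open Matrix

private lemma vecMulVec_mulVec' (u v w : Fin 3 → ℝ) :
    (vecMulVec u v).mulVec w = (v ⬝ᵥ w) • u := by
  funext i
  simp [vecMulVec_apply, mulVec, dotProduct, ← Finset.mul_sum, mul_comm, mul_assoc,
    mul_left_comm]

private lemma dotProduct_self_nonneg' (v : Fin 3 → ℝ) : 0 ≤ v ⬝ᵥ v := by
  apply Finset.sum_nonneg; intro i _; exact mul_self_nonneg _

/-- The planar screw displacement `S(x) = c + R(x - c) + x⃗_⊥`, with
`c = x_m + (1/2)cot(θ/2) L x⃗_∥`, maps `p₁ = (x₁,n₁)` to `p₂ = (x₂,n₂)`: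
`S(x₁) = x₂` and `R n₁ = n₂`. -/
theorem planar_screw_displacement_maps
    (x₁ n₁ x₂ n₂ : Fin 3 → ℝ)
    (hn₁ : n₁ ⬝ᵥ n₁ = 1) (hn₂ : n₂ ⬝ᵥ n₂ = 1)
    (hne : n₁ ≠ n₂) (hne' : n₁ ≠ -n₂)
    (xpar : Fin 3 → ℝ)
    (hpar : xpar ∈ Submodule.span ℝ {n₁, n₂})
    (hperp₁ : ((x₂ - x₁) - xpar) ⬝ᵥ n₁ = 0)
    (hperp₂ : ((x₂ - x₁) - xpar) ⬝ᵥ n₂ = 0) :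
    let θ := Real.arccos (n₁ ⬝ᵥ n₂)
    let L := (Real.sin θ)⁻¹ • (vecMulVec n₂ n₁ - vecMulVec n₁ n₂)
    let R := (1 : Matrix (Fin 3) (Fin 3) ℝ) + Real.sin θ • L
      + (1 - Real.cos θ) • (L * L)
    let xm := (2 : ℝ)⁻¹ • (x₁ + x₂)
    let c := xm + ((2 : ℝ)⁻¹ * (Real.cos (θ / 2) / Real.sin (θ / 2))) •
      L.mulVec xpar
    c + R.mulVec (x₁ - c) + ((x₂ - x₁) - xpar) = x₂ ∧ R.mulVec n₁ = n₂ := by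
  intro θ L R xm c
  have hsym : n₂ ⬝ᵥ n₁ = n₁ ⬝ᵥ n₂ := dotProduct_comm n₂ n₁
  set a := n₁ ⬝ᵥ n₂ with ha
  have ha1 : a < 1 := by
    by_contra h
    push_neg at h
    have hd1 : (n₁ - n₂) ⬝ᵥ (n₁ - n₂) = 2 - 2 * a := by
      simp only [sub_dotProduct, dotProduct_sub, hn₁, hn₂, hsym, ← ha]
      ring
    have h0 : (n₁ - n₂) ⬝ᵥ (n₁ - n₂) = 0 :=
      le_antisymm (by rw [hd1]; linarith) (dotProduct_self_nonneg' _)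
    exact hne (sub_eq_zero.mp (dotProduct_self_eq_zero.mp h0))
  have ha2 : -1 < a := by
    by_contra h
    push_neg at h
    have hd2 : (n₁ + n₂) ⬝ᵥ (n₁ + n₂) = 2 + 2 * a := by
      simp only [add_dotProduct, dotProduct_add, hn₁, hn₂, hsym, ← ha]
      ring
    have h0 : (n₁ + n₂) ⬝ᵥ (n₁ + n₂) = 0 :=
      le_antisymm (by rw [hd2]; linarith) (dotProduct_self_nonneg' _)
    exact hne' (eq_neg_of_add_eq_zero_left (dotProduct_self_eq_zero.mp h0))
  have hθpos : 0 < θ := Real.arccos_pos.mpr ha1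
  have hθlt : θ < Real.pi :=
    lt_of_le_of_ne (Real.arccos_le_pi _)
      (fun h => absurd (Real.arccos_eq_pi.mp h) (by linarith))
  have hcos : Real.cos θ = a := Real.cos_arccos (by linarith) (by linarith)
  set s := Real.sin θ with hsdef
  have hspos : 0 < s := Real.sin_pos_of_pos_of_lt_pi hθpos hθlt
  have hs0 : s ≠ 0 := ne_of_gt hspos
  have hssq : s ^ 2 = 1 - a ^ 2 := by
    have := Real.sin_sq_add_cos_sq θ
    rw [hcos] at this; linarith
  set s2 := Real.sin (θ / 2) with hs2def
  set c2 := Real.cos (θ / 2) with hc2def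
  have hs2pos : 0 < s2 := Real.sin_pos_of_pos_of_lt_pi (by linarith)
    (by linarith [Real.pi_pos])
  have hs20 : s2 ≠ 0 := ne_of_gt hs2pos
  have hdouble : s = 2 * s2 * c2 := by
    have h := Real.sin_two_mul (θ / 2)
    rw [show 2 * (θ / 2) = θ by ring] at h
    rw [hsdef, h, hs2def, hc2def]
  have hpy : s2 ^ 2 + c2 ^ 2 = 1 := Real.sin_sq_add_cos_sq _
  have hhalf : a = 1 - 2 * s2 ^ 2 := by
    have h := Real.cos_two_mul (θ / 2)
    rw [show 2 * (θ / 2) = θ by ring, hcos, ← hc2def] at h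
    nlinarith [hpy]
  -- unfolded definitions
  have hL : L = s⁻¹ • (vecMulVec n₂ n₁ - vecMulVec n₁ n₂) := by rw [hsdef]
  have hR : R = 1 + s • L + (1 - a) • (L * L) := by rw [hsdef, ← hcos]
  have hcdef : c = xm + ((2 : ℝ)⁻¹ * (c2 / s2)) • L.mulVec xpar := by
    rw [hs2def, hc2def]
  have hxm : xm = (2 : ℝ)⁻¹ • (x₁ + x₂) := rfl
  -- the action of L
  have hLv : ∀ v, L.mulVec v = s⁻¹ • ((n₁ ⬝ᵥ v) • n₂ - (n₂ ⬝ᵥ v) • n₁) := by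
    intro v
    rw [hL, smul_mulVec, sub_mulVec, vecMulVec_mulVec', vecMulVec_mulVec']
  have hRv : ∀ v, R.mulVec v = v + s • L.mulVec v
      + (1 - a) • L.mulVec (L.mulVec v) := by
    intro v
    rw [hR, add_mulVec, add_mulVec, one_mulVec, smul_mulVec s L v,
      smul_mulVec (1 - a) (L * L) v, ← mulVec_mulVec v L L]
  -- action on n₁
  have hLn₁ : L.mulVec n₁ = s⁻¹ • n₂ - (s⁻¹ * a) • n₁ := by
    rw [hLv, hn₁, hsym, one_smul, smul_sub, smul_smul]
  have hLLn₁ : L.mulVec (L.mulVec n₁) = -n₁ := by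
    have d1 : n₁ ⬝ᵥ (s⁻¹ • n₂ - (s⁻¹ * a) • n₁) = 0 := by
      simp only [dotProduct_sub, dotProduct_smul, hn₁, ← ha, smul_eq_mul]
      ring
    have d2 : n₂ ⬝ᵥ (s⁻¹ • n₂ - (s⁻¹ * a) • n₁) = s := by
      simp only [dotProduct_sub, dotProduct_smul, hn₂, hsym, ← ha, smul_eq_mul]
      field_simp
      linear_combination -hssq
    rw [hLn₁, hLv, d1, d2, zero_smul, zero_sub, smul_neg, smul_smul,
      inv_mul_cancel₀ hs0, one_smul]
  -- perpendicular part
  set w := (x₂ - x₁) - xpar with hw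
  have hw1 : n₁ ⬝ᵥ w = 0 := by rw [dotProduct_comm]; exact hperp₁
  have hw2 : n₂ ⬝ᵥ w = 0 := by rw [dotProduct_comm]; exact hperp₂
  have hLw : L.mulVec w = 0 := by
    rw [hLv, hw1, hw2]; simp
  have hx₂ : x₂ = x₁ + xpar + w := by rw [hw]; abel
  obtain ⟨α, β, hαβ⟩ := Submodule.mem_span_pair.mp hpar
  have hp1 : n₁ ⬝ᵥ xpar = α + β * a := by
    rw [← hαβ]
    simp only [dotProduct_add, dotProduct_smul, hn₁, ← ha, smul_eq_mul]
    ring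
  have hp2 : n₂ ⬝ᵥ xpar = α * a + β := by
    rw [← hαβ]
    simp only [dotProduct_add, dotProduct_smul, hn₂, hsym, ← ha, smul_eq_mul]
    ring
  have hLpar : L.mulVec xpar
      = (s⁻¹ * (α + β * a)) • n₂ - (s⁻¹ * (α * a + β)) • n₁ := by
    rw [hLv, hp1, hp2, smul_sub, smul_smul, smul_smul]
  have hLLpar : L.mulVec (L.mulVec xpar) = -xpar := by
    have d1 : n₁ ⬝ᵥ ((s⁻¹ * (α + β * a)) • n₂ - (s⁻¹ * (α * a + β)) • n₁)
        = -(β * s) := by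
      simp only [dotProduct_sub, dotProduct_smul, hn₁, ← ha, smul_eq_mul]
      field_simp
      linear_combination β * hssq
    have d2 : n₂ ⬝ᵥ ((s⁻¹ * (α + β * a)) • n₂ - (s⁻¹ * (α * a + β)) • n₁)
        = α * s := by
      simp only [dotProduct_sub, dotProduct_smul, hn₂, hsym, ← ha, smul_eq_mul]
      field_simp
      linear_combination (-α) * hssq
    rw [hLpar, hLv, d1, d2, ← hαβ]
    funext i
    simp only [Pi.smul_apply, Pi.sub_apply, Pi.add_apply, Pi.neg_apply, smul_eq_mul]
    field_simp
    ring
  -- values of R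
  have hRpar : R.mulVec xpar = xpar + s • L.mulVec xpar + (1 - a) • (-xpar) := by
    rw [hRv, hLLpar]
  have hRw : R.mulVec w = w := by
    rw [hRv, hLw]; simp
  have hRLpar : R.mulVec (L.mulVec xpar)
      = L.mulVec xpar + s • (-xpar) + (1 - a) • (-(L.mulVec xpar)) := by
    rw [hRv, hLLpar, mulVec_neg]
  constructor
  · -- the screw displacement maps x₁ to x₂
    have hc : c = x₁ + (2:ℝ)⁻¹ • xpar + (2:ℝ)⁻¹ • w
        + ((2:ℝ)⁻¹ * (c2 / s2)) • L.mulVec xpar := by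
      rw [hcdef, hxm, hx₂]
      module
    have hv : x₁ - c = (-(2:ℝ)⁻¹) • xpar + (-(2:ℝ)⁻¹) • w
        + (-((2:ℝ)⁻¹ * (c2 / s2))) • L.mulVec xpar := by
      rw [hc]; module
    rw [hv, mulVec_add, mulVec_add, mulVec_smul, mulVec_smul, mulVec_smul,
      hRpar, hRw, hRLpar, hc, hx₂, hdouble, hhalf]
    match_scalars
    · ring
    · field_simp
      linear_combination 2 * hpy
    · ring
    · field_simp
      ring
  · -- R maps n₁ to n₂
    rw [hRv, hLLn₁, hLn₁]
    funext i
    simp only [Pi.add_apply, Pi.smul_apply, Pi.sub_apply, Pi.neg_apply, smul_eq_mul]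
    field_simp
    ring
end
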